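/- Let a, b, c be integers with b² - 4ac > 0 and b² - 4ac not a perfect square, and suppose the binary quadratic form n(x,y) = a·x² + b·x·y + c·y² represents some negative integer -R (R > 0). Then the form represents -R at infinitely many distinct integer pairs (x, y). -/
import Mathlib


theorem stmt_3 (a b c R : ℤ) (hΔ : 0 < b ^ 2 - 4 * a * c)
    (hns : ¬ ∃ n : ℤ, b ^ 2 - 4 * a * c = n ^ 2) (hR : 0 < R)
    (hrep : ∃ x y : ℤ, a * x ^ 2 + b * x * y + c * y ^ 2 = -R) :
    {p : ℤ × ℤ | a * p.1 ^ 2 + b * p.1 * p.2 + c * p.2 ^ 2 = -R}.Infinite := by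
  obtain ⟨x₀, y₀, h₀⟩ := hrep
  set Δ : ℤ := b ^ 2 - 4 * a * c with hΔdef
  have hnsq : ¬ IsSquare Δ := by
    rintro ⟨r, hr⟩
    exact hns ⟨r, by rw [hr]; ring⟩
  obtain ⟨s, hs⟩ := Pell.IsFundamental.exists_of_not_isSquare hΔ hnsq
  set f : ℤ → ℤ × ℤ := fun n =>
    (((s ^ n).x - b * (s ^ n).y) * x₀ - 2 * c * (s ^ n).y * y₀,
      2 * a * (s ^ n).y * x₀ + ((s ^ n).x + b * (s ^ n).y) * y₀) with hf
  apply Set.infinite_of_injective_forall_mem (f := f)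
  · intro m n hmn
    have h1 : ((s ^ m).x - b * (s ^ m).y) * x₀ - 2 * c * (s ^ m).y * y₀ =
        ((s ^ n).x - b * (s ^ n).y) * x₀ - 2 * c * (s ^ n).y * y₀ :=
      congrArg Prod.fst hmn
    have h2 : 2 * a * (s ^ m).y * x₀ + ((s ^ m).x + b * (s ^ m).y) * y₀ =
        2 * a * (s ^ n).y * x₀ + ((s ^ n).x + b * (s ^ n).y) * y₀ :=
      congrArg Prod.snd hmn
    have key : 2 * R * ((s ^ m).y - (s ^ n).y) = 0 := by
      linear_combination y₀ * h1 - x₀ * h2 + 2 * ((s ^ m).y - (s ^ n).y) * h₀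
    have hy : (s ^ m).y = (s ^ n).y := by
      have : (s ^ m).y - (s ^ n).y = 0 := by
        rcases mul_eq_zero.mp key with h | h
        · omega
        · exact h
      omega
    exact hs.y_strictMono.injective hy
  · intro n
    have hp := (s ^ n).prop
    show a * (((s ^ n).x - b * (s ^ n).y) * x₀ - 2 * c * (s ^ n).y * y₀) ^ 2 +
        b * (((s ^ n).x - b * (s ^ n).y) * x₀ - 2 * c * (s ^ n).y * y₀) *
          (2 * a * (s ^ n).y * x₀ + ((s ^ n).x + b * (s ^ n).y) * y₀) +
        c * (2 * a * (s ^ n).y * x₀ + ((s ^ n).x + b * (s ^ n).y) * y₀) ^ 2 = -R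
    linear_combination ((s ^ n).x ^ 2 - Δ * (s ^ n).y ^ 2) * h₀ + (-R) * hp
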